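/- G_{v0}(k)·G_{v1}(k) = G_{v1}(k)·G_{v0}(k), i.e. the product of the two congruence subgroups (in either order) is a group, and it equals the subgroup generated by G_{v0}(k) and G_{v1}(k). -/

import Mathlib

open Matrix Pointwise
open scoped OnePoint

noncomputable section

/-- `ϖ` is a uniformizer of the nonarchimedean field `F`. -/
def IsUniformizer (F : Type*) [NormedField F] (ϖ : F) : Prop :=
  ϖ ≠ 0 ∧ ‖ϖ‖ < 1 ∧ ∀ x : F, ‖x‖ < 1 → ‖x‖ ≤ ‖ϖ‖

/-- The principal congruence subgroup `G_{v₀}(k)` of level `k`: matrices in `GL₂(𝒪)`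
congruent to the identity modulo `ϖ^k` (entrywise, each entry of `g - 1` lies in `ϖ^k 𝒪`,
i.e. has norm at most `‖ϖ‖^k`). -/
def Gv0 (F : Type*) [NormedField F] (ϖ : F) (k : ℕ) : Set (GL (Fin 2) F) :=
  {g | ‖(g : Matrix (Fin 2) (Fin 2) F) 0 0 - 1‖ ≤ ‖ϖ‖ ^ k ∧
       ‖(g : Matrix (Fin 2) (Fin 2) F) 0 1‖ ≤ ‖ϖ‖ ^ k ∧
       ‖(g : Matrix (Fin 2) (Fin 2) F) 1 0‖ ≤ ‖ϖ‖ ^ k ∧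
       ‖(g : Matrix (Fin 2) (Fin 2) F) 1 1 - 1‖ ≤ ‖ϖ‖ ^ k}

/-- The diagonal matrix `diag(ϖ, 1)` as an element of `GL₂(F)`. -/
def dmat (F : Type*) [Field F] (ϖ : F) (h : ϖ ≠ 0) : GL (Fin 2) F :=
  Matrix.GeneralLinearGroup.mkOfDetNeZero !![ϖ, 0; 0, 1]
    (by simpa [Matrix.det_fin_two_of] using h)

/-- `G_{v₁}(k) = diag(ϖ,1) · G_{v₀}(k) · diag(ϖ,1)⁻¹`. -/
def Gv1 (F : Type*) [NormedField F] (ϖ : F) (h : ϖ ≠ 0) (k : ℕ) : Set (GL (Fin 2) F) :=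
  (fun g => dmat F ϖ h * g * (dmat F ϖ h)⁻¹) '' Gv0 F ϖ k

/-- The explicit set `H` of matrices `[[1+ϖ^k a, ϖ^k b],[ϖ^{k-1} c, 1+ϖ^k d]]`, `a,b,c,d ∈ 𝒪`;
this is the edge group `G_e(k)`. -/
def Ge (F : Type*) [NormedField F] (ϖ : F) (k : ℕ) : Set (GL (Fin 2) F) :=
  {g | ‖(g : Matrix (Fin 2) (Fin 2) F) 0 0 - 1‖ ≤ ‖ϖ‖ ^ k ∧
       ‖(g : Matrix (Fin 2) (Fin 2) F) 0 1‖ ≤ ‖ϖ‖ ^ k ∧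
       ‖(g : Matrix (Fin 2) (Fin 2) F) 1 0‖ ≤ ‖ϖ‖ ^ (k - 1) ∧
       ‖(g : Matrix (Fin 2) (Fin 2) F) 1 1 - 1‖ ≤ ‖ϖ‖ ^ k}

/-- The explicit description of `G_{v₁}(k)`: matrices
`[[1+ϖ^k a, ϖ^{k+1} b],[ϖ^{k-1} c, 1+ϖ^k d]]` with `a,b,c,d ∈ 𝒪`. -/
def Gv1ex (F : Type*) [NormedField F] (ϖ : F) (k : ℕ) : Set (GL (Fin 2) F) :=
  {g | ‖(g : Matrix (Fin 2) (Fin 2) F) 0 0 - 1‖ ≤ ‖ϖ‖ ^ k ∧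
       ‖(g : Matrix (Fin 2) (Fin 2) F) 0 1‖ ≤ ‖ϖ‖ ^ (k + 1) ∧
       ‖(g : Matrix (Fin 2) (Fin 2) F) 1 0‖ ≤ ‖ϖ‖ ^ (k - 1) ∧
       ‖(g : Matrix (Fin 2) (Fin 2) F) 1 1 - 1‖ ≤ ‖ϖ‖ ^ k}

open scoped Classical in
/-- The right Möbius action of `g = [[a,b],[c,d]]` on `ℙ¹(F) = F ∪ {∞}` (here modelled as
`Option F`, with `none = ∞`): `z·g = (az+c)/(bz+d)`, `∞·g = a/b`, with value `∞` when the
denominator vanishes. -/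
def moeb (F : Type*) [Field F] (g : Matrix (Fin 2) (Fin 2) F) : Option F → Option F
  | Option.some z => if g 0 1 * z + g 1 1 = 0 then Option.none
      else Option.some ((g 0 0 * z + g 1 0) / (g 0 1 * z + g 1 1))
  | Option.none => if g 0 1 = 0 then Option.none else Option.some (g 0 0 / g 0 1)

/-- The orbit of `z ∈ ℙ¹(F)` under a set `S` of elements of `GL₂(F)` acting on the right by
Möbius transformations. -/
def orb (F : Type*) [Field F] (S : Set (GL (Fin 2) F)) (z : Option F) : Set (Option F) :=
  {w | ∃ g ∈ S, moeb F (g : Matrix (Fin 2) (Fin 2) F) z = w}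

/-- `D` is an orbit of `S` on `ℙ¹(F)`. -/
def IsOrbit (F : Type*) [Field F] (S : Set (GL (Fin 2) F)) (D : Set (Option F)) : Prop :=
  ∃ z, D = orb F S z

/-- The region `B_w(∞, |ϖ|) = {w ∈ ℙ¹(F) : |1/w| ≤ |ϖ|} = {|w| ≥ |ϖ|⁻¹} ∪ {∞}`. -/
def regionInfty (F : Type*) [NormedField F] (ϖ : F) : Set (Option F) :=
  {w | w = Option.none ∨ ∃ z : F, w = Option.some z ∧ ‖ϖ‖⁻¹ ≤ ‖z‖}

/-- The coordinate `1/w` on `ℙ¹(F)`, with `1/∞ = 0`. -/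
def invc (F : Type*) [Field F] : Option F → F
  | Option.none => 0
  | Option.some z => z⁻¹

/-- The residue field of `F` has cardinality `q`: there are exactly `q` classes in
`𝒪/(ϖ)`, witnessed by a set of representatives. -/
def ResidueCard (F : Type*) [NormedField F] (ϖ : F) (q : ℕ) : Prop :=
  ∃ s : Finset F, s.card = q ∧ (∀ x ∈ s, ‖x‖ ≤ 1) ∧
    ∀ x : F, ‖x‖ ≤ 1 → ∃! y, y ∈ s ∧ ‖x - y‖ ≤ ‖ϖ‖

/-- The conjugate `h S h⁻¹` of a set of matrices. -/
def conjSet (F : Type*) [Field F] (h : GL (Fin 2) F) (S : Set (GL (Fin 2) F)) :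
    Set (GL (Fin 2) F) :=
  (fun g => h * g * h⁻¹) '' S

/-- The matrix `g_α = [[1,0],[α,ϖ]]` as an element of `GL₂(F)`. -/
def galpha (F : Type*) [Field F] (ϖ α : F) (h : ϖ ≠ 0) : GL (Fin 2) F :=
  Matrix.GeneralLinearGroup.mkOfDetNeZero !![1, 0; α, ϖ]
    (by simpa [Matrix.det_fin_two_of] using h)

/-- The diagonal matrix `diag(1, ϖ^n)` as an element of `GL₂(F)`. -/
def dmatN (F : Type*) [Field F] (ϖ : F) (h : ϖ ≠ 0) (n : ℕ) : GL (Fin 2) F :=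
  Matrix.GeneralLinearGroup.mkOfDetNeZero !![1, 0; 0, ϖ ^ n]
    (by simpa [Matrix.det_fin_two_of] using pow_ne_zero n h)

section statement2aux

variable {F : Type*} [NontriviallyNormedField F] [IsUltrametricDist F]

private lemma st2_umax {x y : F} {a : ℝ} (hx : ‖x‖ ≤ a) (hy : ‖y‖ ≤ a) : ‖x + y‖ ≤ a :=
  (IsUltrametricDist.norm_add_le_max x y).trans (max_le hx hy)

omit [IsUltrametricDist F] in
private lemma st2_prodle {x y : F} {a b : ℝ} (hx : ‖x‖ ≤ a) (hy : ‖y‖ ≤ b) :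
    ‖x * y‖ ≤ a * b := by
  rw [norm_mul]
  exact mul_le_mul hx hy (norm_nonneg _) ((norm_nonneg x).trans hx)

private lemma st2_norm_eq_one {x : F} (h : ‖x - 1‖ < 1) : ‖x‖ = 1 := by
  have h1 : ‖x‖ ≤ 1 := by
    have hx : x = (x - 1) + 1 := by ring
    rw [hx]
    exact st2_umax h.le (by simp)
  refine le_antisymm h1 ?_
  have h2 : (1 : F) = x + -(x - 1) := by ring
  have h3 : ‖(1:F)‖ ≤ max ‖x‖ ‖-(x-1)‖ := by
    calc ‖(1:F)‖ = ‖x + -(x-1)‖ := by rw [← h2]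
    _ ≤ max ‖x‖ ‖-(x-1)‖ := IsUltrametricDist.norm_add_le_max x (-(x-1))
  rw [norm_one, norm_neg] at h3
  rcases le_max_iff.mp h3 with h'|h'
  · exact h'
  · linarith

private lemma st2_near_one {x : F} {a : ℝ} (h : ‖x - 1‖ ≤ a) (ha : a ≤ 1) : ‖x‖ ≤ 1 := by
  have hx : x = (x - 1) + 1 := by ring
  rw [hx]
  exact st2_umax (h.trans ha) (by simp)

/-- The unipotent-type matrix `!![1,0;c,1]`. -/
private def lowu (F : Type*) [Field F] (c : F) : GL (Fin 2) F :=
  Matrix.GeneralLinearGroup.mkOfDetNeZero !![1, 0; c, 1]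
    (by simp [Matrix.det_fin_two_of])

omit [NontriviallyNormedField F] [IsUltrametricDist F] in
private lemma st2_lowu_mul {F : Type*} [Field F] (c d : F) :
    lowu F c * lowu F d = lowu F (c + d) := by
  apply Units.ext
  show (!![1, 0; c, 1] * !![1, 0; d, 1] : Matrix (Fin 2) (Fin 2) F) = !![1, 0; c + d, 1]
  ext i j
  fin_cases i <;> fin_cases j <;>
    simp [Matrix.mul_apply, Fin.sum_univ_two]

omit [NontriviallyNormedField F] [IsUltrametricDist F] in
private lemma st2_lowu_zero {F : Type*} [Field F] : lowu F 0 = 1 := by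
  apply Units.ext
  show (!![1, 0; 0, 1] : Matrix (Fin 2) (Fin 2) F) = 1
  ext i j
  fin_cases i <;> fin_cases j <;> simp [Matrix.one_apply]

private lemma st2_lowu_mem (ϖ : F) (k : ℕ) {c : F} (hc : ‖c‖ ≤ ‖ϖ‖ ^ (k - 1)) :
    lowu F c ∈ Gv1ex F ϖ k := by
  refine ⟨?_, ?_, ?_, ?_⟩
  · show ‖(!![1, 0; c, 1] : Matrix (Fin 2) (Fin 2) F) 0 0 - 1‖ ≤ _
    simp <;> positivity
  · show ‖(!![1, 0; c, 1] : Matrix (Fin 2) (Fin 2) F) 0 1‖ ≤ _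
    simp <;> positivity
  · show ‖(!![1, 0; c, 1] : Matrix (Fin 2) (Fin 2) F) 1 0‖ ≤ _
    simpa using hc
  · show ‖(!![1, 0; c, 1] : Matrix (Fin 2) (Fin 2) F) 1 1 - 1‖ ≤ _
    simp <;> positivity

private lemma st2_Gv0_sub_Ge (ϖ : F) (hϖ : IsUniformizer F ϖ) (k : ℕ) :
    Gv0 F ϖ k ⊆ Ge F ϖ k := by
  rintro g ⟨h1, h2, h3, h4⟩
  exact ⟨h1, h2, h3.trans (pow_le_pow_of_le_one (norm_nonneg ϖ) hϖ.2.1.le (Nat.sub_le k 1)), h4⟩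

private lemma st2_Gv1ex_sub_Ge (ϖ : F) (hϖ : IsUniformizer F ϖ) (k : ℕ) :
    Gv1ex F ϖ k ⊆ Ge F ϖ k := by
  rintro g ⟨h1, h2, h3, h4⟩
  exact ⟨h1, h2.trans (pow_le_pow_of_le_one (norm_nonneg ϖ) hϖ.2.1.le (Nat.le_succ k)), h3, h4⟩

private lemma st2_Ge_one (ϖ : F) (k : ℕ) : (1 : GL (Fin 2) F) ∈ Ge F ϖ k := by
  have h1 : ((1 : GL (Fin 2) F) : Matrix (Fin 2) (Fin 2) F) = 1 := rfl
  refine ⟨?_, ?_, ?_, ?_⟩ <;> rw [h1] <;> simp [Matrix.one_apply] <;> positivity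

private lemma st2_Ge_mul (ϖ : F) (hϖ : IsUniformizer F ϖ) (k : ℕ) (hk : 1 ≤ k)
    {g h : GL (Fin 2) F} (hg : g ∈ Ge F ϖ k) (hh : h ∈ Ge F ϖ k) : g * h ∈ Ge F ϖ k := by
  obtain ⟨a1, a2, a3, a4⟩ := hg
  obtain ⟨b1, b2, b3, b4⟩ := hh
  have hr0 : (0:ℝ) ≤ ‖ϖ‖ := norm_nonneg ϖ
  have hk1 : ‖ϖ‖ ^ k ≤ 1 := pow_le_one₀ hr0 hϖ.2.1.le
  have hk1' : ‖ϖ‖ ^ (k - 1) ≤ 1 := pow_le_one₀ hr0 hϖ.2.1.le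
  have hM00 : ‖(g : Matrix (Fin 2) (Fin 2) F) 0 0‖ ≤ 1 := st2_near_one a1 hk1
  have hM11 : ‖(g : Matrix (Fin 2) (Fin 2) F) 1 1‖ ≤ 1 := st2_near_one a4 hk1
  have hN00 : ‖(h : Matrix (Fin 2) (Fin 2) F) 0 0‖ ≤ 1 := st2_near_one b1 hk1
  have hN11 : ‖(h : Matrix (Fin 2) (Fin 2) F) 1 1‖ ≤ 1 := st2_near_one b4 hk1
  have emul : ∀ i j, ((g * h : GL (Fin 2) F) : Matrix (Fin 2) (Fin 2) F) i j =
      (g : Matrix (Fin 2) (Fin 2) F) i 0 * (h : Matrix (Fin 2) (Fin 2) F) 0 j +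
      (g : Matrix (Fin 2) (Fin 2) F) i 1 * (h : Matrix (Fin 2) (Fin 2) F) 1 j := by
    intro i j
    show ((g : Matrix (Fin 2) (Fin 2) F) * (h : Matrix (Fin 2) (Fin 2) F)) i j = _
    simp [Matrix.mul_apply, Fin.sum_univ_two]
  refine ⟨?_, ?_, ?_, ?_⟩
  · rw [emul 0 0]
    have key : (g : Matrix (Fin 2) (Fin 2) F) 0 0 * (h : Matrix (Fin 2) (Fin 2) F) 0 0 +
        (g : Matrix (Fin 2) (Fin 2) F) 0 1 * (h : Matrix (Fin 2) (Fin 2) F) 1 0 - 1 =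
        (((g : Matrix (Fin 2) (Fin 2) F) 0 0 - 1) * (h : Matrix (Fin 2) (Fin 2) F) 0 0 +
          ((h : Matrix (Fin 2) (Fin 2) F) 0 0 - 1)) +
        (g : Matrix (Fin 2) (Fin 2) F) 0 1 * (h : Matrix (Fin 2) (Fin 2) F) 1 0 := by ring
    rw [key]
    refine st2_umax (st2_umax ?_ b1) ?_
    · simpa using st2_prodle a1 hN00
    · simpa using st2_prodle a2 (b3.trans hk1')
  · rw [emul 0 1]
    refine st2_umax ?_ ?_
    · simpa using st2_prodle hM00 b2
    · simpa using st2_prodle a2 hN11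
  · rw [emul 1 0]
    refine st2_umax ?_ ?_
    · simpa using st2_prodle a3 hN00
    · simpa using st2_prodle hM11 b3
  · rw [emul 1 1]
    have key : (g : Matrix (Fin 2) (Fin 2) F) 1 0 * (h : Matrix (Fin 2) (Fin 2) F) 0 1 +
        (g : Matrix (Fin 2) (Fin 2) F) 1 1 * (h : Matrix (Fin 2) (Fin 2) F) 1 1 - 1 =
        (g : Matrix (Fin 2) (Fin 2) F) 1 0 * (h : Matrix (Fin 2) (Fin 2) F) 0 1 +
        (((g : Matrix (Fin 2) (Fin 2) F) 1 1 - 1) * (h : Matrix (Fin 2) (Fin 2) F) 1 1 +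
          ((h : Matrix (Fin 2) (Fin 2) F) 1 1 - 1)) := by ring
    rw [key]
    refine st2_umax ?_ (st2_umax ?_ b4)
    · simpa using st2_prodle (a3.trans hk1') b2
    · simpa using st2_prodle a4 hN11

private lemma st2_Ge_inv (ϖ : F) (hϖ : IsUniformizer F ϖ) (k : ℕ) (hk : 1 ≤ k)
    {g : GL (Fin 2) F} (hg : g ∈ Ge F ϖ k) : g⁻¹ ∈ Ge F ϖ k := by
  obtain ⟨a1, a2, a3, a4⟩ := hg
  have hr0 : (0:ℝ) ≤ ‖ϖ‖ := norm_nonneg ϖ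
  have hk1 : ‖ϖ‖ ^ k ≤ 1 := pow_le_one₀ hr0 hϖ.2.1.le
  have hk1' : ‖ϖ‖ ^ (k - 1) ≤ 1 := pow_le_one₀ hr0 hϖ.2.1.le
  have hklt : ‖ϖ‖ ^ k < 1 := pow_lt_one₀ hr0 hϖ.2.1 (by omega)
  have hM00 : ‖(g : Matrix (Fin 2) (Fin 2) F) 0 0‖ ≤ 1 := st2_near_one a1 hk1
  have hM11 : ‖(g : Matrix (Fin 2) (Fin 2) F) 1 1‖ ≤ 1 := st2_near_one a4 hk1
  set M := (g : Matrix (Fin 2) (Fin 2) F) with hMdef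
  have hdet : M.det = M 0 0 * M 1 1 - M 0 1 * M 1 0 := Matrix.det_fin_two M
  have hd1 : ‖M.det - 1‖ ≤ ‖ϖ‖ ^ k := by
    have key : M.det - 1 = ((M 0 0 - 1) * M 1 1 + (M 1 1 - 1)) + -(M 0 1 * M 1 0) := by
      rw [hdet]; ring
    rw [key]
    refine st2_umax (st2_umax ?_ a4) ?_
    · simpa using st2_prodle a1 hM11
    · rw [norm_neg]
      simpa using st2_prodle a2 (a3.trans hk1')
  have hdn : ‖M.det‖ = 1 := st2_norm_eq_one (hd1.trans_lt hklt)
  have hdet0 : M.det ≠ 0 := by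
    intro h0
    rw [h0] at hdn; simp at hdn
  have hMinv : M⁻¹ = (M.det)⁻¹ • !![M 1 1, -(M 0 1); -(M 1 0), M 0 0] := by
    rw [Matrix.inv_def, Matrix.adjugate_fin_two, Ring.inverse_eq_inv']
  have hco : ((g⁻¹ : GL (Fin 2) F) : Matrix (Fin 2) (Fin 2) F) = M⁻¹ := Matrix.coe_units_inv g
  have e : ∀ i j, ((g⁻¹ : GL (Fin 2) F) : Matrix (Fin 2) (Fin 2) F) i j =
      (M.det)⁻¹ * !![M 1 1, -(M 0 1); -(M 1 0), M 0 0] i j := by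
    intro i j
    rw [hco, hMinv]
    simp
  have hdin : ‖(M.det)⁻¹‖ = 1 := by rw [norm_inv, hdn, inv_one]
  refine ⟨?_, ?_, ?_, ?_⟩
  · rw [e 0 0]
    have e1 : (!![M 1 1, -(M 0 1); -(M 1 0), M 0 0] : Matrix (Fin 2) (Fin 2) F) 0 0 = M 1 1 := by
      simp
    rw [e1]
    have key : (M.det)⁻¹ * M 1 1 - 1 = (M.det)⁻¹ * (M 1 1 - M.det) := by
      field_simp
    rw [key, norm_mul, hdin, one_mul]
    have key2 : M 1 1 - M.det = -((M 0 0 - 1) * M 1 1) + M 0 1 * M 1 0 := by rw [hdet]; ring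
    rw [key2]
    refine st2_umax ?_ ?_
    · rw [norm_neg]; simpa using st2_prodle a1 hM11
    · simpa using st2_prodle a2 (a3.trans hk1')
  · rw [e 0 1]
    have e1 : (!![M 1 1, -(M 0 1); -(M 1 0), M 0 0] : Matrix (Fin 2) (Fin 2) F) 0 1 = -(M 0 1) := by
      simp
    rw [e1, norm_mul, hdin, one_mul, norm_neg]
    exact a2
  · rw [e 1 0]
    have e1 : (!![M 1 1, -(M 0 1); -(M 1 0), M 0 0] : Matrix (Fin 2) (Fin 2) F) 1 0 = -(M 1 0) := by
      simp
    rw [e1, norm_mul, hdin, one_mul, norm_neg]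
    exact a3
  · rw [e 1 1]
    have e1 : (!![M 1 1, -(M 0 1); -(M 1 0), M 0 0] : Matrix (Fin 2) (Fin 2) F) 1 1 = M 0 0 := by
      simp
    rw [e1]
    have key : (M.det)⁻¹ * M 0 0 - 1 = (M.det)⁻¹ * (M 0 0 - M.det) := by
      field_simp
    rw [key, norm_mul, hdin, one_mul]
    have key2 : M 0 0 - M.det = -((M 1 1 - 1) * M 0 0) + M 0 1 * M 1 0 := by rw [hdet]; ring
    rw [key2]
    refine st2_umax ?_ ?_
    · rw [norm_neg]; simpa using st2_prodle a4 hM00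
    · simpa using st2_prodle a2 (a3.trans hk1')

omit [NontriviallyNormedField F] [IsUltrametricDist F] in
private lemma st2_matconj {F : Type*} [Field F] (u : F) (M : Matrix (Fin 2) (Fin 2) F) :
    !![u, 0; 0, 1] * M * !![u⁻¹, 0; 0, 1] =
      !![M 0 0 * (u * u⁻¹), u * M 0 1; u⁻¹ * M 1 0, M 1 1] := by
  rw [Matrix.eta_fin_two M, Matrix.mul_fin_two, Matrix.mul_fin_two]
  ext i j
  fin_cases i <;> fin_cases j <;> simp <;> ring

omit [IsUltrametricDist F] in
private lemma st2_dmat_inv (ϖ : F) (h : ϖ ≠ 0) :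
    ((dmat F ϖ h)⁻¹ : GL (Fin 2) F) = Matrix.GeneralLinearGroup.mkOfDetNeZero
      !![ϖ⁻¹, 0; 0, 1] (by simpa [Matrix.det_fin_two_of] using inv_ne_zero h) := by
  apply inv_eq_of_mul_eq_one_right
  apply Units.ext
  show (!![ϖ, 0; 0, 1] * !![ϖ⁻¹, 0; 0, 1] : Matrix (Fin 2) (Fin 2) F) = 1
  ext i j
  fin_cases i <;> fin_cases j <;>
    simp [Matrix.mul_apply, Fin.sum_univ_two, Matrix.one_apply, mul_inv_cancel₀ h]

private lemma st2_Gv1_eq (ϖ : F) (hϖ : IsUniformizer F ϖ) (k : ℕ) (hk : 1 ≤ k) :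
    Gv1 F ϖ hϖ.1 k = Gv1ex F ϖ k := by
  have hu : ϖ ≠ 0 := hϖ.1
  have hr0 : (0:ℝ) < ‖ϖ‖ := norm_pos_iff.2 hu
  have hpk : ‖ϖ‖ * ‖ϖ‖ ^ (k - 1) = ‖ϖ‖ ^ k := by
    rw [← pow_succ']
    congr 1
    omega
  ext x
  constructor
  · rintro ⟨g, hg, rfl⟩
    obtain ⟨a1, a2, a3, a4⟩ := hg
    have hco : ((dmat F ϖ hu * g * (dmat F ϖ hu)⁻¹ : GL (Fin 2) F) : Matrix (Fin 2) (Fin 2) F) =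
        !![(g : Matrix (Fin 2) (Fin 2) F) 0 0 * (ϖ * ϖ⁻¹), ϖ * (g : Matrix (Fin 2) (Fin 2) F) 0 1;
           ϖ⁻¹ * (g : Matrix (Fin 2) (Fin 2) F) 1 0, (g : Matrix (Fin 2) (Fin 2) F) 1 1] := by
      calc ((dmat F ϖ hu * g * (dmat F ϖ hu)⁻¹ : GL (Fin 2) F) : Matrix (Fin 2) (Fin 2) F)
          = !![ϖ, 0; 0, 1] * (g : Matrix (Fin 2) (Fin 2) F) * !![ϖ⁻¹, 0; 0, 1] := by
            have hcinv : (((dmat F ϖ hu)⁻¹ : GL (Fin 2) F) : Matrix (Fin 2) (Fin 2) F) =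
                !![ϖ⁻¹, 0; 0, 1] := by rw [st2_dmat_inv]; rfl
            rw [← hcinv]
            rfl
        _ = _ := st2_matconj ϖ (g : Matrix (Fin 2) (Fin 2) F)
    refine ⟨?_, ?_, ?_, ?_⟩
    · rw [hco]
      simpa [mul_inv_cancel₀ hu] using a1
    · rw [hco]
      have e1 : (!![(g : Matrix (Fin 2) (Fin 2) F) 0 0 * (ϖ * ϖ⁻¹),
          ϖ * (g : Matrix (Fin 2) (Fin 2) F) 0 1;
          ϖ⁻¹ * (g : Matrix (Fin 2) (Fin 2) F) 1 0, (g : Matrix (Fin 2) (Fin 2) F) 1 1] :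
          Matrix (Fin 2) (Fin 2) F) 0 1 = ϖ * (g : Matrix (Fin 2) (Fin 2) F) 0 1 := by simp
      rw [e1, norm_mul, pow_succ, mul_comm (‖ϖ‖^k)]
      exact mul_le_mul_of_nonneg_left a2 hr0.le
    · rw [hco]
      have e1 : (!![(g : Matrix (Fin 2) (Fin 2) F) 0 0 * (ϖ * ϖ⁻¹),
          ϖ * (g : Matrix (Fin 2) (Fin 2) F) 0 1;
          ϖ⁻¹ * (g : Matrix (Fin 2) (Fin 2) F) 1 0, (g : Matrix (Fin 2) (Fin 2) F) 1 1] :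
          Matrix (Fin 2) (Fin 2) F) 1 0 = ϖ⁻¹ * (g : Matrix (Fin 2) (Fin 2) F) 1 0 := by simp
      rw [e1, norm_mul, norm_inv]
      have : ‖ϖ‖⁻¹ * ‖(g : Matrix (Fin 2) (Fin 2) F) 1 0‖ ≤ ‖ϖ‖⁻¹ * ‖ϖ‖ ^ k :=
        mul_le_mul_of_nonneg_left a3 (by positivity)
      refine this.trans ?_
      rw [← hpk, ← mul_assoc, inv_mul_cancel₀ (ne_of_gt hr0), one_mul]
    · rw [hco]
      simpa using a4
  · rintro ⟨b1, b2, b3, b4⟩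
    refine ⟨(dmat F ϖ hu)⁻¹ * x * dmat F ϖ hu, ?_, by group⟩
    have hco : (((dmat F ϖ hu)⁻¹ * x * dmat F ϖ hu : GL (Fin 2) F) : Matrix (Fin 2) (Fin 2) F) =
        !![(x : Matrix (Fin 2) (Fin 2) F) 0 0 * (ϖ⁻¹ * ϖ),
           ϖ⁻¹ * (x : Matrix (Fin 2) (Fin 2) F) 0 1;
           ϖ * (x : Matrix (Fin 2) (Fin 2) F) 1 0, (x : Matrix (Fin 2) (Fin 2) F) 1 1] := by
      calc (((dmat F ϖ hu)⁻¹ * x * dmat F ϖ hu : GL (Fin 2) F) : Matrix (Fin 2) (Fin 2) F)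
          = !![ϖ⁻¹, 0; 0, 1] * (x : Matrix (Fin 2) (Fin 2) F) * !![(ϖ⁻¹)⁻¹, 0; 0, 1] := by
            have hcinv : (((dmat F ϖ hu)⁻¹ : GL (Fin 2) F) : Matrix (Fin 2) (Fin 2) F) =
                !![ϖ⁻¹, 0; 0, 1] := by rw [st2_dmat_inv]; rfl
            rw [show !![ϖ⁻¹, 0; 0, 1] * (x : Matrix (Fin 2) (Fin 2) F) * !![(ϖ⁻¹)⁻¹, 0; 0, 1] =
                !![ϖ⁻¹, 0; 0, 1] * (x : Matrix (Fin 2) (Fin 2) F) * !![ϖ, 0; 0, 1] from by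
              rw [inv_inv], ← hcinv]
            rfl
        _ = !![(x : Matrix (Fin 2) (Fin 2) F) 0 0 * (ϖ⁻¹ * (ϖ⁻¹)⁻¹),
               ϖ⁻¹ * (x : Matrix (Fin 2) (Fin 2) F) 0 1;
               (ϖ⁻¹)⁻¹ * (x : Matrix (Fin 2) (Fin 2) F) 1 0,
               (x : Matrix (Fin 2) (Fin 2) F) 1 1] := st2_matconj ϖ⁻¹ _
        _ = _ := by rw [inv_inv]
    refine ⟨?_, ?_, ?_, ?_⟩
    · rw [hco]
      simpa [inv_mul_cancel₀ hu] using b1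
    · rw [hco]
      have e1 : (!![(x : Matrix (Fin 2) (Fin 2) F) 0 0 * (ϖ⁻¹ * ϖ),
          ϖ⁻¹ * (x : Matrix (Fin 2) (Fin 2) F) 0 1;
          ϖ * (x : Matrix (Fin 2) (Fin 2) F) 1 0, (x : Matrix (Fin 2) (Fin 2) F) 1 1] :
          Matrix (Fin 2) (Fin 2) F) 0 1 = ϖ⁻¹ * (x : Matrix (Fin 2) (Fin 2) F) 0 1 := by simp
      rw [e1, norm_mul, norm_inv]
      have : ‖ϖ‖⁻¹ * ‖(x : Matrix (Fin 2) (Fin 2) F) 0 1‖ ≤ ‖ϖ‖⁻¹ * ‖ϖ‖ ^ (k + 1) :=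
        mul_le_mul_of_nonneg_left b2 (by positivity)
      refine this.trans ?_
      rw [pow_succ']
      rw [← mul_assoc, inv_mul_cancel₀ (ne_of_gt hr0), one_mul]
    · rw [hco]
      have e1 : (!![(x : Matrix (Fin 2) (Fin 2) F) 0 0 * (ϖ⁻¹ * ϖ),
          ϖ⁻¹ * (x : Matrix (Fin 2) (Fin 2) F) 0 1;
          ϖ * (x : Matrix (Fin 2) (Fin 2) F) 1 0, (x : Matrix (Fin 2) (Fin 2) F) 1 1] :
          Matrix (Fin 2) (Fin 2) F) 1 0 = ϖ * (x : Matrix (Fin 2) (Fin 2) F) 1 0 := by simp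
      rw [e1, norm_mul]
      have : ‖ϖ‖ * ‖(x : Matrix (Fin 2) (Fin 2) F) 1 0‖ ≤ ‖ϖ‖ * ‖ϖ‖ ^ (k - 1) :=
        mul_le_mul_of_nonneg_left b3 hr0.le
      exact this.trans (le_of_eq hpk)
    · rw [hco]
      simpa using b4

private lemma st2_Ge_sub01 (ϖ : F) (hϖ : IsUniformizer F ϖ) (k : ℕ) (hk : 1 ≤ k) :
    Ge F ϖ k ⊆ Gv0 F ϖ k * Gv1ex F ϖ k := by
  intro g hg
  obtain ⟨a1, a2, a3, a4⟩ := hg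
  have hr0 : (0:ℝ) ≤ ‖ϖ‖ := norm_nonneg ϖ
  have hk1 : ‖ϖ‖ ^ k ≤ 1 := pow_le_one₀ hr0 hϖ.2.1.le
  have hk1' : ‖ϖ‖ ^ (k - 1) ≤ 1 := pow_le_one₀ hr0 hϖ.2.1.le
  have hklt : ‖ϖ‖ ^ k < 1 := pow_lt_one₀ hr0 hϖ.2.1 (by omega)
  have h11n : ‖(g : Matrix (Fin 2) (Fin 2) F) 1 1‖ = 1 := st2_norm_eq_one (a4.trans_lt hklt)
  have h11 : (g : Matrix (Fin 2) (Fin 2) F) 1 1 ≠ 0 := by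
    intro h0; rw [h0] at h11n; simp at h11n
  set c := (g : Matrix (Fin 2) (Fin 2) F) 1 0 / (g : Matrix (Fin 2) (Fin 2) F) 1 1 with hcdef
  have hc : ‖c‖ ≤ ‖ϖ‖ ^ (k - 1) := by
    rw [hcdef, norm_div, h11n, div_one]; exact a3
  have emul : ∀ i j, ((g * lowu F (-c) : GL (Fin 2) F) : Matrix (Fin 2) (Fin 2) F) i j =
      ((g : Matrix (Fin 2) (Fin 2) F) * !![1, 0; -c, 1]) i j := fun i j => rfl
  have hg0 : g * lowu F (-c) ∈ Gv0 F ϖ k := by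
    refine ⟨?_, ?_, ?_, ?_⟩
    · rw [emul 0 0]
      have key : ((g : Matrix (Fin 2) (Fin 2) F) * !![1, 0; -c, 1]) 0 0 =
          (g : Matrix (Fin 2) (Fin 2) F) 0 0 + (g : Matrix (Fin 2) (Fin 2) F) 0 1 * (-c) := by
        simp [Matrix.mul_apply, Fin.sum_univ_two]
      rw [key]
      have key2 : (g : Matrix (Fin 2) (Fin 2) F) 0 0 +
          (g : Matrix (Fin 2) (Fin 2) F) 0 1 * (-c) - 1 =
          ((g : Matrix (Fin 2) (Fin 2) F) 0 0 - 1) +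
          -((g : Matrix (Fin 2) (Fin 2) F) 0 1 * c) := by ring
      rw [key2]
      refine st2_umax a1 ?_
      rw [norm_neg]
      simpa using st2_prodle a2 (hc.trans hk1')
    · rw [emul 0 1]
      have key : ((g : Matrix (Fin 2) (Fin 2) F) * !![1, 0; -c, 1]) 0 1 =
          (g : Matrix (Fin 2) (Fin 2) F) 0 1 := by
        simp [Matrix.mul_apply, Fin.sum_univ_two]
      rw [key]; exact a2
    · rw [emul 1 0]
      have key : ((g : Matrix (Fin 2) (Fin 2) F) * !![1, 0; -c, 1]) 1 0 = 0 := by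
        simp [Matrix.mul_apply, Fin.sum_univ_two, hcdef]
        field_simp
        ring
      rw [key]
      simp <;> positivity
    · rw [emul 1 1]
      have key : ((g : Matrix (Fin 2) (Fin 2) F) * !![1, 0; -c, 1]) 1 1 =
          (g : Matrix (Fin 2) (Fin 2) F) 1 1 := by
        simp [Matrix.mul_apply, Fin.sum_univ_two]
      rw [key]; exact a4
  have hdecomp : (g * lowu F (-c)) * lowu F c = g := by
    rw [mul_assoc, st2_lowu_mul, neg_add_cancel, st2_lowu_zero, mul_one]
  exact hdecomp ▸ Set.mul_mem_mul hg0 (st2_lowu_mem ϖ k hc)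

private lemma st2_Ge_sub10 (ϖ : F) (hϖ : IsUniformizer F ϖ) (k : ℕ) (hk : 1 ≤ k) :
    Ge F ϖ k ⊆ Gv1ex F ϖ k * Gv0 F ϖ k := by
  intro g hg
  obtain ⟨a1, a2, a3, a4⟩ := hg
  have hr0 : (0:ℝ) ≤ ‖ϖ‖ := norm_nonneg ϖ
  have hk1 : ‖ϖ‖ ^ k ≤ 1 := pow_le_one₀ hr0 hϖ.2.1.le
  have hk1' : ‖ϖ‖ ^ (k - 1) ≤ 1 := pow_le_one₀ hr0 hϖ.2.1.le
  have hklt : ‖ϖ‖ ^ k < 1 := pow_lt_one₀ hr0 hϖ.2.1 (by omega)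
  have h00n : ‖(g : Matrix (Fin 2) (Fin 2) F) 0 0‖ = 1 := st2_norm_eq_one (a1.trans_lt hklt)
  have h00 : (g : Matrix (Fin 2) (Fin 2) F) 0 0 ≠ 0 := by
    intro h0; rw [h0] at h00n; simp at h00n
  set c := (g : Matrix (Fin 2) (Fin 2) F) 1 0 / (g : Matrix (Fin 2) (Fin 2) F) 0 0 with hcdef
  have hc : ‖c‖ ≤ ‖ϖ‖ ^ (k - 1) := by
    rw [hcdef, norm_div, h00n, div_one]; exact a3
  have emul : ∀ i j, ((lowu F (-c) * g : GL (Fin 2) F) : Matrix (Fin 2) (Fin 2) F) i j =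
      (!![1, 0; -c, 1] * (g : Matrix (Fin 2) (Fin 2) F)) i j := fun i j => rfl
  have hg0 : lowu F (-c) * g ∈ Gv0 F ϖ k := by
    refine ⟨?_, ?_, ?_, ?_⟩
    · rw [emul 0 0]
      have key : (!![1, 0; -c, 1] * (g : Matrix (Fin 2) (Fin 2) F)) 0 0 =
          (g : Matrix (Fin 2) (Fin 2) F) 0 0 := by
        simp [Matrix.mul_apply, Fin.sum_univ_two]
      rw [key]; exact a1
    · rw [emul 0 1]
      have key : (!![1, 0; -c, 1] * (g : Matrix (Fin 2) (Fin 2) F)) 0 1 =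
          (g : Matrix (Fin 2) (Fin 2) F) 0 1 := by
        simp [Matrix.mul_apply, Fin.sum_univ_two]
      rw [key]; exact a2
    · rw [emul 1 0]
      have key : (!![1, 0; -c, 1] * (g : Matrix (Fin 2) (Fin 2) F)) 1 0 = 0 := by
        simp [Matrix.mul_apply, Fin.sum_univ_two, hcdef]
        field_simp
        ring
      rw [key]
      simp <;> positivity
    · rw [emul 1 1]
      have key : (!![1, 0; -c, 1] * (g : Matrix (Fin 2) (Fin 2) F)) 1 1 =
          -c * (g : Matrix (Fin 2) (Fin 2) F) 0 1 + (g : Matrix (Fin 2) (Fin 2) F) 1 1 := by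
        simp [Matrix.mul_apply, Fin.sum_univ_two]
      rw [key]
      have key2 : -c * (g : Matrix (Fin 2) (Fin 2) F) 0 1 +
          (g : Matrix (Fin 2) (Fin 2) F) 1 1 - 1 =
          ((g : Matrix (Fin 2) (Fin 2) F) 1 1 - 1) +
          -(c * (g : Matrix (Fin 2) (Fin 2) F) 0 1) := by ring
      rw [key2]
      refine st2_umax a4 ?_
      rw [norm_neg]
      simpa using st2_prodle (hc.trans hk1') a2
  have hdecomp : lowu F c * (lowu F (-c) * g) = g := by
    rw [← mul_assoc, st2_lowu_mul, add_neg_cancel, st2_lowu_zero, one_mul]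
  exact hdecomp ▸ Set.mul_mem_mul (st2_lowu_mem ϖ k hc) hg0

end statement2aux

theorem statement2 (p : ℕ) [Fact p.Prime] (F : Type*) [NontriviallyNormedField F]
    [IsUltrametricDist F] [NormedAlgebra ℚ_[p] F] [FiniteDimensional ℚ_[p] F]
    (ϖ : F) (hϖ : IsUniformizer F ϖ) (k : ℕ) (hk : 1 ≤ k) :
    Gv0 F ϖ k * Gv1 F ϖ hϖ.1 k = Gv1 F ϖ hϖ.1 k * Gv0 F ϖ k ∧
    Gv0 F ϖ k * Gv1 F ϖ hϖ.1 k =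
      ((Subgroup.closure (Gv0 F ϖ k ∪ Gv1 F ϖ hϖ.1 k) : Subgroup (GL (Fin 2) F)) :
        Set (GL (Fin 2) F)) := by
  have e1 := st2_Gv1_eq ϖ hϖ k hk
  rw [e1]
  have sub0 := st2_Gv0_sub_Ge ϖ hϖ k
  have sub1 := st2_Gv1ex_sub_Ge ϖ hϖ k
  have eqA : Gv0 F ϖ k * Gv1ex F ϖ k = Ge F ϖ k := by
    apply subset_antisymm
    · rw [Set.mul_subset_iff]
      intro a ha b hb
      exact st2_Ge_mul ϖ hϖ k hk (sub0 ha) (sub1 hb)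
    · exact st2_Ge_sub01 ϖ hϖ k hk
  have eqB : Gv1ex F ϖ k * Gv0 F ϖ k = Ge F ϖ k := by
    apply subset_antisymm
    · rw [Set.mul_subset_iff]
      intro a ha b hb
      exact st2_Ge_mul ϖ hϖ k hk (sub1 ha) (sub0 hb)
    · exact st2_Ge_sub10 ϖ hϖ k hk
  refine ⟨eqA.trans eqB.symm, ?_⟩
  rw [eqA]
  apply subset_antisymm
  · intro g hg
    rcases Set.mem_mul.1 (st2_Ge_sub01 ϖ hϖ k hk hg) with ⟨a, ha, b, hb, rfl⟩
    exact mul_mem (Subgroup.subset_closure (Set.mem_union_left _ ha))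
      (Subgroup.subset_closure (Set.mem_union_right _ hb))
  · set H : Subgroup (GL (Fin 2) F) :=
      { carrier := Ge F ϖ k
        mul_mem' := fun ha hb => st2_Ge_mul ϖ hϖ k hk ha hb
        one_mem' := st2_Ge_one ϖ k
        inv_mem' := fun ha => st2_Ge_inv ϖ hϖ k hk ha }
    have hle : Subgroup.closure (Gv0 F ϖ k ∪ Gv1ex F ϖ k) ≤ H :=
      (Subgroup.closure_le H).2 (Set.union_subset sub0 sub1)
    exact fun x hx => hle hx
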